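/- For the Lie algebra of type (hc2) ([e₂,e₄]=e₃, [e₄,e₃]=e₂, [e₃,e₂]=e₄) with the standard hypercomplex HN-metric structure, the Lee forms θₐ(z) = gⁱʲ Fₐ(eᵢ,eⱼ,z), with Fₐ(x,y,z) = g((∇ₓJₐ)y, z), have the only nonzero components θ₁(e₂) = -1, θ₂(e₃) = -2, θ₃(e₄) = 2. -/
import Mathlib


noncomputable section

/-- The underlying 4-dimensional real vector space. -/
abbrev V : Type := Fin 4 → ℝ

/-- The standard basis of ℝ⁴. -/
def e : Fin 4 → V := fun i => Pi.single i 1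

/-- The neutral metric g(x,y) = x¹y¹ + x²y² - x³y³ - x⁴y⁴. -/
def g (x y : V) : ℝ := x 0 * y 0 + x 1 * y 1 - x 2 * y 2 - x 3 * y 3

/-- J₁ of the standard hypercomplex structure. -/
def J1 (x : V) : V := ![-x 1, x 0, x 3, -x 2]

/-- J₂ of the standard hypercomplex structure. -/
def J2 (x : V) : V := ![-x 2, -x 3, x 0, x 1]

/-- J₃ of the standard hypercomplex structure. -/
def J3 (x : V) : V := ![x 3, -x 2, x 1, -x 0]

/-- The bracket of type (hc2): [e₂,e₄]=e₃, [e₄,e₃]=e₂, [e₃,e₂]=e₄. -/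
def br (x y : V) : V :=
  ![0, x 3 * y 2 - x 2 * y 3, x 1 * y 3 - x 3 * y 1, x 2 * y 1 - x 1 * y 2]


/-- Structure tensor F(x,y,z) = g((∇ₓJ)y, z) = g(∇ₓ(Jy) - J(∇ₓy), z). -/
def F (J : V → V) (nabla : V → V → V) (x y z : V) : ℝ :=
  g (nabla x (J y) - J (nabla x y)) z

/-- Lee form θ(z) = Σᵢ gⁱⁱ F(eᵢ,eᵢ,z) with gⁱⁱ = (1,1,-1,-1). -/
def theta (J : V → V) (nabla : V → V → V) (z : V) : ℝ :=
  F J nabla (e 0) (e 0) z + F J nabla (e 1) (e 1) z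
    - F J nabla (e 2) (e 2) z - F J nabla (e 3) (e 3) z


lemma e0 : e 0 = ![1,0,0,0] := by funext j; fin_cases j <;> simp [e]
lemma e1 : e 1 = ![0,1,0,0] := by funext j; fin_cases j <;> simp [e]
lemma e2 : e 2 = ![0,0,1,0] := by funext j; fin_cases j <;> simp [e]
lemma e3 : e 3 = ![0,0,0,1] := by funext j; fin_cases j <;> simp [e]

def N (x y : V) : V :=
  ![ (g (br x y) (e 0) + g (br (e 0) x) y + g (br (e 0) y) x) / 2,
     (g (br x y) (e 1) + g (br (e 1) x) y + g (br (e 1) y) x) / 2,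
     -((g (br x y) (e 2) + g (br (e 2) x) y + g (br (e 2) y) x) / 2),
     -((g (br x y) (e 3) + g (br (e 3) x) y + g (br (e 3) y) x) / 2) ]

lemma nabla_eq (nabla : V → V → V)
    (hK : ∀ x y z : V,
      2 * g (nabla x y) z = g (br x y) z + g (br z x) y + g (br z y) x)
    (x y : V) : nabla x y = N x y := by
  have h0 := hK x y (e 0); have h1 := hK x y (e 1)
  have h2 := hK x y (e 2); have h3 := hK x y (e 3)
  simp only [g, br, e0, e1, e2, e3, Matrix.cons_val_zero, Matrix.cons_val_one,
    Matrix.head_cons, Matrix.cons_val_two, Matrix.tail_cons,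
    Matrix.cons_val_three] at h0 h1 h2 h3
  norm_num at h0 h1 h2 h3
  funext k
  fin_cases k <;>
    simp only [N, g, br, e0, e1, e2, e3, Fin.zero_eta, Fin.mk_one,
      Fin.reduceFinMk, Matrix.cons_val_zero, Matrix.cons_val_one,
      Matrix.head_cons, Matrix.cons_val_two, Matrix.tail_cons,
      Matrix.cons_val_three] <;> norm_num <;> linarith


lemma Nd0 : N (e 0) (e 0) = ![(0 : ℝ), (0 : ℝ), (0 : ℝ), (0 : ℝ)] := by
  funext k; fin_cases k <;> simp [N, g, br, e0, e1, e2, e3] <;> norm_num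

lemma Nd1 : N (e 1) (e 1) = ![(0 : ℝ), (0 : ℝ), (0 : ℝ), (0 : ℝ)] := by
  funext k; fin_cases k <;> simp [N, g, br, e0, e1, e2, e3] <;> norm_num

lemma Nd2 : N (e 2) (e 2) = ![(0 : ℝ), (0 : ℝ), (0 : ℝ), (0 : ℝ)] := by
  funext k; fin_cases k <;> simp [N, g, br, e0, e1, e2, e3] <;> norm_num

lemma Nd3 : N (e 3) (e 3) = ![(0 : ℝ), (0 : ℝ), (0 : ℝ), (0 : ℝ)] := by
  funext k; fin_cases k <;> simp [N, g, br, e0, e1, e2, e3] <;> norm_num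

lemma NJ1_0 : N (e 0) (J1 (e 0)) = ![(0 : ℝ), (0 : ℝ), (0 : ℝ), (0 : ℝ)] := by
  funext k; fin_cases k <;> simp [N, g, br, J1, e0, e1, e2, e3] <;> norm_num

lemma NJ1_1 : N (e 1) (J1 (e 1)) = ![(0 : ℝ), (0 : ℝ), (0 : ℝ), (0 : ℝ)] := by
  funext k; fin_cases k <;> simp [N, g, br, J1, e0, e1, e2, e3] <;> norm_num

lemma NJ1_2 : N (e 2) (J1 (e 2)) = ![(0 : ℝ), ((1/2) : ℝ), (0 : ℝ), (0 : ℝ)] := by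
  funext k; fin_cases k <;> simp [N, g, br, J1, e0, e1, e2, e3] <;> norm_num

lemma NJ1_3 : N (e 3) (J1 (e 3)) = ![(0 : ℝ), ((1/2) : ℝ), (0 : ℝ), (0 : ℝ)] := by
  funext k; fin_cases k <;> simp [N, g, br, J1, e0, e1, e2, e3] <;> norm_num

lemma NJ2_0 : N (e 0) (J2 (e 0)) = ![(0 : ℝ), (0 : ℝ), (0 : ℝ), (0 : ℝ)] := by
  funext k; fin_cases k <;> simp [N, g, br, J2, e0, e1, e2, e3] <;> norm_num

lemma NJ2_1 : N (e 1) (J2 (e 1)) = ![(0 : ℝ), (0 : ℝ), ((3/2) : ℝ), (0 : ℝ)] := by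
  funext k; fin_cases k <;> simp [N, g, br, J2, e0, e1, e2, e3] <;> norm_num

lemma NJ2_2 : N (e 2) (J2 (e 2)) = ![(0 : ℝ), (0 : ℝ), (0 : ℝ), (0 : ℝ)] := by
  funext k; fin_cases k <;> simp [N, g, br, J2, e0, e1, e2, e3] <;> norm_num

lemma NJ2_3 : N (e 3) (J2 (e 3)) = ![(0 : ℝ), (0 : ℝ), (-(1/2) : ℝ), (0 : ℝ)] := by
  funext k; fin_cases k <;> simp [N, g, br, J2, e0, e1, e2, e3] <;> norm_num

lemma NJ3_0 : N (e 0) (J3 (e 0)) = ![(0 : ℝ), (0 : ℝ), (0 : ℝ), (0 : ℝ)] := by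
  funext k; fin_cases k <;> simp [N, g, br, J3, e0, e1, e2, e3] <;> norm_num

lemma NJ3_1 : N (e 1) (J3 (e 1)) = ![(0 : ℝ), (0 : ℝ), (0 : ℝ), (-(3/2) : ℝ)] := by
  funext k; fin_cases k <;> simp [N, g, br, J3, e0, e1, e2, e3] <;> norm_num

lemma NJ3_2 : N (e 2) (J3 (e 2)) = ![(0 : ℝ), (0 : ℝ), (0 : ℝ), ((1/2) : ℝ)] := by
  funext k; fin_cases k <;> simp [N, g, br, J3, e0, e1, e2, e3] <;> norm_num

lemma NJ3_3 : N (e 3) (J3 (e 3)) = ![(0 : ℝ), (0 : ℝ), (0 : ℝ), (0 : ℝ)] := by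
  funext k; fin_cases k <;> simp [N, g, br, J3, e0, e1, e2, e3] <;> norm_num

/-- Lee forms of the (hc2) structure: θ₁(e₂)=-1, θ₂(e₃)=-2, θ₃(e₄)=2 are the
only nonzero components. -/
theorem hc2_lee_forms (nabla : V → V → V)
    (hK : ∀ x y z : V,
      2 * g (nabla x y) z = g (br x y) z + g (br z x) y + g (br z y) x) :
    (∀ i : Fin 4, theta J1 nabla (e i) = if i = 1 then -1 else 0) ∧
    (∀ i : Fin 4, theta J2 nabla (e i) = if i = 2 then -2 else 0) ∧
    (∀ i : Fin 4, theta J3 nabla (e i) = if i = 3 then 2 else 0) := by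
  have hnn : nabla = N := funext fun x => funext fun y => nabla_eq nabla hK x y
  subst hnn
  refine ⟨?_, ?_, ?_⟩ <;> intro i <;> fin_cases i <;>
  · simp only [theta, F, Nd0, Nd1, Nd2, Nd3,
      NJ1_0, NJ1_1, NJ1_2, NJ1_3, NJ2_0, NJ2_1, NJ2_2, NJ2_3,
      NJ3_0, NJ3_1, NJ3_2, NJ3_3]
    simp only [g, J1, J2, J3, e0, e1, e2, e3, Pi.sub_apply,
      Matrix.cons_val_zero, Matrix.cons_val_one, Matrix.head_cons,
      Matrix.cons_val_two, Matrix.tail_cons, Matrix.cons_val_three,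
      Fin.isValue]
    norm_num [e, Pi.single_apply,
      show ((⟨2, by omega⟩ : Fin 4)) = 2 from rfl,
      show ((⟨3, by omega⟩ : Fin 4)) = 3 from rfl]
    all_goals simp only [Fin.reduceEq, reduceIte]
    all_goals norm_num
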